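/- The identity (−1)^{e+1}·∏_{i=1}^e H_i = q·exp(Σ_{m≥1} (1/m)·[z^{me}]{Q(z)^m}·q^m) holds in K[[u]] under the identification q = u^e; both sides are formal power series in q = u^e, the series (−1)^{e+1}·(∏_{i=1}^e H_i)/q has constant term 1 (the sign (−1)^{e+1} is exactly the constant coefficient of (∏_{i=1}^e H_i)/q, arising from the product of the e-th roots of unity over all branches), and equivalently log((−1)^{e+1}·∏_{i=1}^e H_i / q) = Σ_{m≥1} (1/m)·[z^{me}]{Q(z)^m}·q^m, where log denotes the formal logarithm of a power series with constant term 1. -/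

import Mathlib

open PowerSeries

/-- Composition `Q ∘ h` of formal power series, intended for `h` with zero constant
term (then `coeff n (h^k) = 0` for `k > n`, so the finite truncation below is the
honest composition / substitution of `h` into `Q`). -/
noncomputable def pcomp {K : Type*} [Field K] (Q h : PowerSeries K) : PowerSeries K :=
  PowerSeries.mk fun n => ∑ k ∈ Finset.range (n + 1),
    PowerSeries.coeff k Q * PowerSeries.coeff n (h ^ k)

/-- The exponential series `Σ_{n≥0} z^n/n!`. -/
noncomputable def expSeries (K : Type*) [Field K] [CharZero K] : PowerSeries K :=
  PowerSeries.mk fun n => ((n.factorial : K))⁻¹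

/-- The logarithm series `Σ_{m≥1} (−1)^{m+1} z^m/m` (its coefficient at `m = 0`
vanishes since `(0 : K)⁻¹ = 0`). -/
noncomputable def logSeries (K : Type*) [Field K] [CharZero K] : PowerSeries K :=
  PowerSeries.mk fun n => (-1) ^ (n + 1) * (n : K)⁻¹

/-- The formal exponential `exp f` of a power series `f` with zero constant term. -/
noncomputable def expS {K : Type*} [Field K] [CharZero K] (f : PowerSeries K) : PowerSeries K :=
  pcomp (expSeries K) f

/-- The formal logarithm `log f = Σ_{m≥1} (−1)^{m+1}(f−1)^m/m` of a power series `f`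
with constant term `1`. -/
noncomputable def logS {K : Type*} [Field K] [CharZero K] (f : PowerSeries K) : PowerSeries K :=
  pcomp (logSeries K) (f - 1)


section Aux
open Finset
variable {K : Type*} [Field K]

lemma sum_square_eq_sum_antidiag (a b c : ℕ → K) (n : ℕ) (hcz : ∀ m, n < m → c m = 0) :
    ∑ i ∈ range (n+1), ∑ j ∈ range (n+1), a i * b j * c (i+j)
      = ∑ k ∈ range (n+1), (∑ p ∈ Finset.HasAntidiagonal.antidiagonal k, a p.1 * b p.2) * c k := by
  have hdisj : (↑(range (n+1)) : Set ℕ).PairwiseDisjoint Finset.HasAntidiagonal.antidiagonal := by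
    intro x _ y _ hxy
    simp only [Finset.disjoint_left]
    intro p hpx hpy
    rw [Finset.HasAntidiagonal.mem_antidiagonal] at hpx hpy
    exact hxy (hpx ▸ hpy.symm ▸ rfl)
  have hbi : (range (n+1)).biUnion Finset.HasAntidiagonal.antidiagonal
      = (range (n+1) ×ˢ range (n+1)).filter (fun p => p.1 + p.2 ≤ n) := by
    ext p
    simp only [mem_biUnion, mem_range, Finset.HasAntidiagonal.mem_antidiagonal, Finset.mem_filter,
      Finset.mem_product]
    constructor
    · rintro ⟨k, hk, rfl⟩; omega
    · rintro ⟨⟨h1, h2⟩, h3⟩; exact ⟨p.1 + p.2, by omega, rfl⟩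
  have hR : ∑ k ∈ range (n+1), (∑ p ∈ Finset.HasAntidiagonal.antidiagonal k, a p.1 * b p.2) * c k
      = ∑ p ∈ (range (n+1)).biUnion Finset.HasAntidiagonal.antidiagonal, a p.1 * b p.2 * c (p.1 + p.2) := by
    rw [Finset.sum_biUnion hdisj]
    refine Finset.sum_congr rfl fun k _ => ?_
    rw [Finset.sum_mul]
    refine Finset.sum_congr rfl fun p hp => ?_
    rw [Finset.HasAntidiagonal.mem_antidiagonal] at hp
    rw [hp]
  rw [hR, hbi, ← Finset.sum_product']
  rw [← Finset.sum_filter_add_sum_filter_not (range (n+1) ×ˢ range (n+1))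
    (fun p => p.1 + p.2 ≤ n)]
  have hz : ∑ p ∈ (range (n+1) ×ˢ range (n+1)).filter (fun p => ¬ p.1 + p.2 ≤ n),
      a p.1 * b p.2 * c (p.1 + p.2) = 0 := by
    refine Finset.sum_eq_zero fun p hp => ?_
    rw [Finset.mem_filter] at hp
    rw [hcz _ (by omega), mul_zero]
  rw [hz, add_zero]

lemma coeff_pow_zero_of_lt {f : PowerSeries K} (h0 : constantCoeff f = 0)
    {k n : ℕ} (hn : n < k) : coeff n (f ^ k) = 0 := by
  have : (X : PowerSeries K) ^ k ∣ f ^ k := pow_dvd_pow_of_dvd (X_dvd_iff.mpr h0) k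
  exact X_pow_dvd_iff.mp this n hn

lemma coeff_pcomp (Q h : PowerSeries K) (n : ℕ) :
    coeff n (pcomp Q h) = ∑ k ∈ range (n + 1), coeff k Q * coeff n (h ^ k) :=
  coeff_mk n _

lemma coeff_pcomp_trunc {h : PowerSeries K} (h0 : constantCoeff h = 0)
    (Q : PowerSeries K) {n M : ℕ} (hM : n + 1 ≤ M) :
    coeff n (pcomp Q h) = coeff n (∑ k ∈ range M, C (coeff k Q) * h ^ k) := by
  rw [coeff_pcomp, map_sum]
  simp only [coeff_C_mul]
  rw [← sum_range_add_sum_Ico _ hM]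
  have : ∑ k ∈ Ico (n+1) M, coeff k Q * coeff n (h ^ k) = 0 := by
    refine sum_eq_zero fun k hk => ?_
    rw [coeff_pow_zero_of_lt h0 (mem_Ico.mp hk).1, mul_zero]
  rw [this, add_zero]

lemma coeff_mul_congr2 {a b c d : PowerSeries K} {n : ℕ}
    (hab : ∀ j ≤ n, coeff j a = coeff j b)
    (hcd : ∀ j ≤ n, coeff j c = coeff j d) :
    coeff n (a * c) = coeff n (b * d) := by
  rw [coeff_mul, coeff_mul]
  refine Finset.sum_congr rfl fun p hp => ?_
  rw [Finset.HasAntidiagonal.mem_antidiagonal] at hp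
  rw [hab p.1 (by omega), hcd p.2 (by omega)]

lemma pcomp_mul {h : PowerSeries K} (h0 : constantCoeff h = 0) (P Q : PowerSeries K) :
    pcomp (P * Q) h = pcomp P h * pcomp Q h := by
  ext n
  have hR : coeff n (pcomp P h * pcomp Q h)
      = coeff n ((∑ k ∈ range (n+1), C (coeff k P) * h ^ k)
          * (∑ k ∈ range (n+1), C (coeff k Q) * h ^ k)) :=
    coeff_mul_congr2
      (fun j hj => coeff_pcomp_trunc h0 P (by omega))
      (fun j hj => coeff_pcomp_trunc h0 Q (by omega))
  rw [hR, Finset.sum_mul_sum]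
  have hexp : ∀ i j : ℕ, C (coeff i P) * h ^ i * (C (coeff j Q) * h ^ j)
      = C (coeff i P * coeff j Q) * h ^ (i + j) := by
    intro i j; rw [map_mul, pow_add]; ring
  simp only [hexp]
  rw [map_sum]
  simp only [map_sum, coeff_C_mul]
  rw [sum_square_eq_sum_antidiag _ _ _ n (fun m hm => coeff_pow_zero_of_lt h0 hm),
    coeff_pcomp]
  refine Finset.sum_congr rfl fun k _ => ?_
  rw [coeff_mul]

lemma pcomp_one {h : PowerSeries K} : pcomp (1 : PowerSeries K) h = 1 := by
  ext n
  rw [coeff_pcomp]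
  rcases Nat.eq_zero_or_pos n with rfl | hn
  · simp
  · rw [Finset.sum_eq_single 0]
    · simp
    · intro k hk hk0
      simp [coeff_one, hk0]
    · simp

lemma pcomp_pow {h : PowerSeries K} (h0 : constantCoeff h = 0) (Q : PowerSeries K) (m : ℕ) :
    pcomp (Q ^ m) h = (pcomp Q h) ^ m := by
  induction m with
  | zero => simpa using pcomp_one
  | succ m ih => rw [pow_succ, pow_succ, pcomp_mul h0, ih]

lemma pcomp_derivative {h : PowerSeries K} (h0 : constantCoeff h = 0) (P : PowerSeries K) :
    d⁄dX K (pcomp P h) = pcomp (d⁄dX K P) h * d⁄dX K h := by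
  ext n
  set T : PowerSeries K := ∑ k ∈ range (n+2), C (coeff k P) * h ^ k with hT
  have hL : coeff n (d⁄dX K (pcomp P h)) = coeff n (d⁄dX K T) := by
    rw [coeff_derivative, coeff_derivative, coeff_pcomp_trunc h0 P (M := n + 2) (by omega)]
  have hdT : d⁄dX K T
      = (∑ j ∈ range (n+1), C (coeff (j+1) P * (j+1)) * h ^ j) * d⁄dX K h := by
    rw [hT, map_sum]
    have : ∀ k ∈ range (n+2), d⁄dX K (C (coeff k P) * h ^ k)
        = (C (coeff k P * k) * h ^ (k-1)) * d⁄dX K h := by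
      intro k _
      rw [Derivation.leibniz, Derivation.leibniz_pow, derivative_C, smul_zero, add_zero]
      simp only [smul_eq_mul, nsmul_eq_mul]
      rw [map_mul, map_natCast (C (R := K)) k]
      ring
    rw [Finset.sum_congr rfl this, ← Finset.sum_mul]
    congr 1
    rw [Finset.sum_range_succ']
    simp only [Nat.cast_zero, mul_zero, map_zero, zero_mul, add_zero]
    refine Finset.sum_congr rfl fun j _ => ?_
    simp [Nat.add_sub_cancel]
  have hR : coeff n (pcomp (d⁄dX K P) h * d⁄dX K h)
      = coeff n ((∑ j ∈ range (n+1), C (coeff (j+1) P * (j+1)) * h ^ j) * d⁄dX K h) := by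
    refine coeff_mul_congr2 (fun j hj => ?_) (fun j _ => rfl)
    rw [coeff_pcomp_trunc h0 (d⁄dX K P) (M := n + 1) (by omega)]
    rw [map_sum, map_sum]
    refine Finset.sum_congr rfl fun k _ => ?_
    rw [coeff_C_mul, coeff_C_mul, coeff_derivative]
  rw [hL, hdT, hR]

lemma constantCoeff_pcomp {h : PowerSeries K} (h0 : constantCoeff h = 0)
    (Q : PowerSeries K) : constantCoeff (pcomp Q h) = coeff 0 Q := by
  rw [← coeff_zero_eq_constantCoeff_apply, coeff_pcomp]
  simp

noncomputable def geomS (K : Type*) [Field K] : PowerSeries K :=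
  PowerSeries.mk fun n => (-1 : K) ^ n

lemma geom_mul {f : PowerSeries K} (h0 : constantCoeff f = 0) :
    pcomp (geomS K) f * (1 + f) = 1 := by
  ext n
  have h1 : coeff n (pcomp (geomS K) f * (1 + f))
      = coeff n ((∑ k ∈ range (n+1), C (coeff k (geomS K)) * f ^ k) * (1 + f)) :=
    coeff_mul_congr2 (fun j hj => coeff_pcomp_trunc h0 _ (by omega)) (fun j _ => rfl)
  have h2 : (∑ k ∈ range (n+1), C (coeff k (geomS K)) * f ^ k)
      = ∑ k ∈ range (n+1), (-f) ^ k := by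
    refine Finset.sum_congr rfl fun k _ => ?_
    rw [geomS, coeff_mk, neg_pow, map_mul, map_pow, map_neg, map_one]
    ring_nf
    simp
  have h3 : (∑ k ∈ range (n+1), (-f) ^ k) * (1 + f) = 1 - (-f) ^ (n+1) := by
    have := geom_sum_mul (-f) (n+1)
    have h4 : (1 + f) = -((-f) - 1) := by ring
    rw [h4, mul_neg, this]
    ring
  rw [h1, h2, h3, map_sub]
  have h5 : coeff n ((-f) ^ (n+1)) = 0 := by
    apply coeff_pow_zero_of_lt (by simpa using h0) (by omega)
  rw [h5, sub_zero]

lemma ode_unique [CharZero K] {B g1 g2 : PowerSeries K}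
    (hd1 : d⁄dX K g1 = g1 * B) (hd2 : d⁄dX K g2 = g2 * B)
    (h0 : constantCoeff g1 = constantCoeff g2) : g1 = g2 := by
  have key : ∀ n, coeff n (g1 - g2) = 0 := by
    intro n
    induction n using Nat.strong_induction_on with
    | _ n ih =>
      match n with
      | 0 => simpa [coeff_zero_eq_constantCoeff_apply, sub_eq_zero] using h0
      | (n+1) =>
        have hD : coeff n (d⁄dX K (g1 - g2)) = coeff n ((g1 - g2) * B) := by
          rw [map_sub, hd1, hd2, sub_mul]
        rw [coeff_derivative, coeff_mul] at hD
        have hz : ∑ p ∈ Finset.HasAntidiagonal.antidiagonal n, coeff p.1 (g1 - g2) * coeff p.2 B = 0 := by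
          refine Finset.sum_eq_zero fun p hp => ?_
          rw [Finset.HasAntidiagonal.mem_antidiagonal] at hp
          rw [ih p.1 (by omega), zero_mul]
        rw [hz] at hD
        have h1 : ((n : K) + 1) ≠ 0 := by exact_mod_cast Nat.succ_ne_zero n
        exact (mul_eq_zero.mp hD).resolve_right h1
  ext n
  simpa [sub_eq_zero] using key n

lemma derivative_expSeries [CharZero K] : d⁄dX K (expSeries K) = expSeries K := by
  ext n
  rw [coeff_derivative, expSeries, coeff_mk, coeff_mk, Nat.factorial_succ]
  have h1 : ((n : K) + 1) ≠ 0 := by exact_mod_cast Nat.succ_ne_zero n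
  have h2 : ((n.factorial : ℕ) : K) ≠ 0 := by exact_mod_cast Nat.factorial_ne_zero n
  push_cast
  rw [mul_inv, mul_comm (((n:K)+1))⁻¹, mul_assoc, inv_mul_cancel₀ h1, mul_one]

lemma derivative_logSeries [CharZero K] : d⁄dX K (logSeries K) = geomS K := by
  ext n
  rw [coeff_derivative, logSeries, geomS, coeff_mk, coeff_mk]
  have h1 : ((n : K) + 1) ≠ 0 := by exact_mod_cast Nat.succ_ne_zero n
  push_cast
  rw [mul_assoc, inv_mul_cancel₀ h1, mul_one, pow_succ, pow_succ]
  ring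

lemma derivative_inv_rel {v w : PowerSeries K} (hvw : v * w = 1) :
    d⁄dX K w = -(w ^ 2 * d⁄dX K v) := by
  have h1 : v * d⁄dX K w + w * d⁄dX K v = 0 := by
    have h := congrArg (d⁄dX K) hvw
    rwa [Derivation.leibniz, Derivation.map_one_eq_zero, smul_eq_mul, smul_eq_mul] at h
  have h2 : v * d⁄dX K w = -(w * d⁄dX K v) := eq_neg_of_add_eq_zero_left h1
  calc d⁄dX K w = (v * w) * d⁄dX K w := by rw [hvw, one_mul]
    _ = w * (v * d⁄dX K w) := by ring
    _ = w * -(w * d⁄dX K v) := by rw [h2]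
    _ = -(w ^ 2 * d⁄dX K v) := by ring

lemma res_lemma [CharZero K] {v w : PowerSeries K} (hvw : v * w = 1)
    (P : PowerSeries K) (N : ℕ) (hN : 1 ≤ N) :
    coeff (N-1) (pcomp P (X * v) * d⁄dX K (X * v) * w ^ N) = coeff (N-1) P := by
  set f : PowerSeries K := X * v with hf
  have h0f : constantCoeff f = 0 := by simp [hf]
  have hdf : d⁄dX K f = v + X * d⁄dX K v := by
    rw [hf, Derivation.leibniz, derivative_X]
    simp only [smul_eq_mul, mul_one]
    ring
  -- replace pcomp by truncation
  have step1 : coeff (N-1) (pcomp P f * d⁄dX K f * w ^ N)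
      = coeff (N-1) ((∑ k ∈ range N, C (coeff k P) * f ^ k) * (d⁄dX K f * w ^ N)) := by
    rw [mul_assoc]
    exact coeff_mul_congr2 (fun j hj => coeff_pcomp_trunc h0f P (by omega)) (fun j _ => rfl)
  rw [step1, Finset.sum_mul, map_sum]
  have key : ∀ k ∈ range N, coeff (N-1) (C (coeff k P) * f ^ k * (d⁄dX K f * w ^ N))
      = coeff k P * (if k = N - 1 then 1 else 0) := by
    intro k hk
    rw [mem_range] at hk
    rw [mul_assoc, coeff_C_mul]
    congr 1
    rcases eq_or_ne k (N-1) with rfl | hne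
    · -- k = N-1 case
      rw [if_pos rfl]
      have hE : f ^ (N-1) * (d⁄dX K f * w ^ N)
          = X ^ (N-1) + X ^ N * (v ^ (N-1) * d⁄dX K v * w ^ N) := by
        rw [hf, hdf, mul_pow]
        have hvwN : v ^ N * w ^ N = 1 := by rw [← mul_pow, hvw, one_pow]
        have hXN : (X : PowerSeries K) ^ N = X ^ (N-1) * X := by
          conv_lhs => rw [show N = (N-1)+1 by omega]
          rw [pow_succ]
        calc X ^ (N-1) * v ^ (N-1) * ((v + X * d⁄dX K v) * w ^ N)
            = X ^ (N-1) * (v ^ (N-1) * v * w ^ N)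
              + (X ^ (N-1) * X) * (v ^ (N-1) * d⁄dX K v * w ^ N) := by ring
          _ = X ^ (N-1) + X ^ N * (v ^ (N-1) * d⁄dX K v * w ^ N) := by
              rw [← pow_succ, show (N-1)+1 = N by omega, hvwN, mul_one, hXN]
      rw [hE, map_add]
      have c1 : coeff (N-1) ((X : PowerSeries K) ^ (N-1)) = 1 := by simp
      have c2 : coeff (N-1) (X ^ N * (v ^ (N-1) * d⁄dX K v * w ^ N)) = 0 := by
        apply X_pow_dvd_iff.mp (Dvd.intro _ rfl) _ (by omega)
      rw [c1, c2, add_zero]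
    · rw [if_neg hne]
      have hklt : k < N - 1 := by omega
      set s : ℕ := N - 1 - k with hs
      have hs1 : 1 ≤ s := by omega
      have hE : f ^ k * (d⁄dX K f * w ^ N)
          = X ^ k * w ^ s + X ^ (k+1) * (w ^ (s+1) * d⁄dX K v) := by
        rw [hf, hdf, mul_pow]
        have e1 : v ^ (k+1) * w ^ N = w ^ s := by
          have hN' : N = (k+1) + s := by omega
          rw [hN', pow_add w (k+1) s, ← mul_assoc, ← mul_pow, hvw, one_pow, one_mul]
        have e2 : v ^ k * w ^ N = w ^ (s+1) := by
          have hN' : N = k + (s+1) := by omega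
          rw [hN', pow_add w k (s+1), ← mul_assoc, ← mul_pow, hvw, one_pow, one_mul]
        calc X ^ k * v ^ k * ((v + X * d⁄dX K v) * w ^ N)
            = X ^ k * (v ^ (k+1) * w ^ N) + X ^ (k+1) * ((v ^ k * w ^ N) * d⁄dX K v) := by
              rw [pow_succ, pow_succ]; ring
          _ = X ^ k * w ^ s + X ^ (k+1) * (w ^ (s+1) * d⁄dX K v) := by rw [e1, e2]
      rw [hE, map_add]
      have c1 : coeff (N-1) ((X : PowerSeries K) ^ k * w ^ s) = coeff s (w ^ s) := by
        have : N - 1 = s + k := by omega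
        rw [this, coeff_X_pow_mul]
      have c2 : coeff (N-1) ((X : PowerSeries K) ^ (k+1) * (w ^ (s+1) * d⁄dX K v))
          = coeff (s-1) (w ^ (s+1) * d⁄dX K v) := by
        have : N - 1 = (s-1) + (k+1) := by omega
        rw [this, coeff_X_pow_mul]
      rw [c1, c2]
      -- the cancellation
      have hdws : d⁄dX K (w ^ s) = -(C ((s : K)) * (w ^ (s+1) * d⁄dX K v)) := by
        rw [Derivation.leibniz_pow, derivative_inv_rel hvw]
        have : w ^ (s-1) * w ^ 2 = w ^ (s+1) := by
          rw [← pow_add]; congr 1; omega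
        simp only [smul_eq_mul, nsmul_eq_mul]
        rw [← map_natCast (C (R := K)) s, ← this]
        ring
      have hco : coeff (s-1) (d⁄dX K (w ^ s)) = coeff s (w ^ s) * s := by
        have h' : s - 1 + 1 = s := by omega
        rw [coeff_derivative, h', Nat.cast_sub hs1]
        push_cast
        ring
      rw [hdws, map_neg, coeff_C_mul] at hco
      have hsne : (s : K) ≠ 0 := by exact_mod_cast Nat.one_le_iff_ne_zero.mp hs1
      have hfin : (coeff s (w ^ s) + coeff (s-1) (w ^ (s+1) * d⁄dX K v)) * (s : K) = 0 := by
        rw [add_mul, ← hco]; ring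
      rcases mul_eq_zero.mp hfin with h | h
      · exact h
      · exact absurd h hsne
  rw [Finset.sum_congr rfl key]
  rw [Finset.sum_eq_single (N-1)]
  · rw [if_pos rfl, mul_one]
  · intro k _ hkne; rw [if_neg hkne, mul_zero]
  · intro hmem; exact absurd (mem_range.mpr (by omega)) hmem

lemma Icc_one_eq_map (e : ℕ) :
    Finset.Icc 1 e = (range e).map ⟨fun i => i + 1, add_left_injective 1⟩ := by
  ext x
  simp only [Finset.mem_Icc, Finset.mem_map, Finset.mem_range, Function.Embedding.coeFn_mk]
  constructor
  · rintro ⟨h1, h2⟩; exact ⟨x - 1, by omega, by omega⟩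
  · rintro ⟨y, hy, rfl⟩; omega

lemma sum_Icc_one {M : Type*} [AddCommMonoid M] (F : ℕ → M) (e : ℕ) :
    ∑ i ∈ Finset.Icc 1 e, F i = ∑ i ∈ range e, F (i + 1) := by
  rw [Icc_one_eq_map, Finset.sum_map]
  rfl

lemma prod_Icc_one {M : Type*} [CommMonoid M] (F : ℕ → M) (e : ℕ) :
    ∏ i ∈ Finset.Icc 1 e, F i = ∏ i ∈ range e, F (i + 1) := by
  rw [Icc_one_eq_map, Finset.prod_map]
  rfl

lemma rou_sum {e : ℕ} (he : 1 ≤ e) {ω : K} (hω : IsPrimitiveRoot ω e) (n : ℕ) :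
    ∑ i ∈ Finset.Icc 1 e, (ω ^ i) ^ n = if e ∣ n then (e : K) else 0 := by
  have hx : ∀ i : ℕ, (ω ^ i) ^ n = (ω ^ n) ^ i := fun i => by
    rw [← pow_mul, ← pow_mul, mul_comm]
  simp only [hx]
  set x : K := ω ^ n with hxdef
  by_cases hdvd : e ∣ n
  · rw [if_pos hdvd]
    have hx1 : x = 1 := (hω.pow_eq_one_iff_dvd n).mpr hdvd
    rw [hx1]
    simp [Nat.card_Icc]
  · rw [if_neg hdvd]
    have hx1 : x ≠ 1 := fun hc => hdvd ((hω.pow_eq_one_iff_dvd n).mp hc)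
    have hxe : x ^ e = 1 := by
      rw [hxdef, ← pow_mul, mul_comm, pow_mul, hω.pow_eq_one, one_pow]
    have hgeom : (∑ i ∈ range e, x ^ i) * (x - 1) = 0 := by
      rw [geom_sum_mul, hxe, sub_self]
    have hsum0 : ∑ i ∈ range e, x ^ i = 0 :=
      (mul_eq_zero.mp hgeom).resolve_right (sub_ne_zero.mpr hx1)
    rw [sum_Icc_one (fun i => x ^ i) e]
    calc ∑ i ∈ range e, x ^ (i+1) = x * ∑ i ∈ range e, x ^ i := by
          rw [Finset.mul_sum]; exact Finset.sum_congr rfl fun i _ => by ring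
      _ = 0 := by rw [hsum0, mul_zero]

lemma rou_sign {e : ℕ} (he : 1 ≤ e) {ω : K} (hω : IsPrimitiveRoot ω e) :
    ω ^ (∑ i ∈ Finset.Icc 1 e, i) = (-1 : K) ^ (e + 1) := by
  rcases Nat.even_or_odd e with ⟨t, ht⟩ | ⟨t, ht⟩
  · -- e = 2t, t ≥ 1
    have ht1 : 1 ≤ t := by omega
    have hsum : ∑ i ∈ Finset.Icc 1 e, i = t * (2 * t + 1) := by
      have h2 : (∑ i ∈ range (e+1), i) * 2 = (e+1) * e := by
        simpa using Finset.sum_range_id_mul_two (e+1)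
      have h3 : ∑ i ∈ Finset.Icc 1 e, i = ∑ i ∈ range (e+1), i := by
        rw [sum_Icc_one (fun i => i) e, Finset.sum_range_succ']
        simp
      have h4 : (∑ i ∈ Finset.Icc 1 e, i) * 2 = (t * (2 * t + 1)) * 2 := by
        rw [h3, h2]; subst ht; ring
      exact Nat.eq_of_mul_eq_mul_right (by norm_num) h4
    have hhalf : ω ^ t = -1 := by
      have hsq : (ω ^ t) ^ 2 = 1 := by
        rw [← pow_mul, mul_comm, show 2 * t = e by omega, hω.pow_eq_one]
      have hne : ω ^ t ≠ 1 := fun hc => by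
        have := (hω.pow_eq_one_iff_dvd t).mp hc
        have := Nat.le_of_dvd (by omega) this
        omega
      have hzz : (ω ^ t - 1) * (ω ^ t + 1) = 0 := by
        calc (ω ^ t - 1) * (ω ^ t + 1) = (ω ^ t) ^ 2 - 1 := by ring
          _ = 0 := by rw [hsq]; ring
      rcases mul_eq_zero.mp hzz with h | h
      · exact absurd (sub_eq_zero.mp h) hne
      · exact eq_neg_of_add_eq_zero_left h
    rw [hsum, pow_mul, hhalf]
    have : e + 1 = 2 * t + 1 := by omega
    rw [this]
  · -- e = 2t+1
    have hsum : ∑ i ∈ Finset.Icc 1 e, i = e * (t + 1) := by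
      have h2 : (∑ i ∈ range (e+1), i) * 2 = (e+1) * e := by
        simpa using Finset.sum_range_id_mul_two (e+1)
      have h3 : ∑ i ∈ Finset.Icc 1 e, i = ∑ i ∈ range (e+1), i := by
        rw [sum_Icc_one (fun i => i) e, Finset.sum_range_succ']
        simp
      have h4 : (∑ i ∈ Finset.Icc 1 e, i) * 2 = (e * (t + 1)) * 2 := by
        rw [h3, h2]; subst ht; ring
      exact Nat.eq_of_mul_eq_mul_right (by norm_num) h4
    rw [hsum, pow_mul, hω.pow_eq_one, one_pow]
    have : e + 1 = 2 * (t + 1) := by omega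
    rw [this, pow_mul]
    norm_num

lemma coeff_prod_lt {ι : Type*} [DecidableEq ι] (s : Finset ι) (f : ι → PowerSeries K)
    (h0 : ∀ i ∈ s, constantCoeff (f i) = 0) {n : ℕ} (hn : n < s.card) :
    coeff n (∏ i ∈ s, f i) = 0 := by
  have hdvd : (X : PowerSeries K) ^ s.card ∣ ∏ i ∈ s, f i := by
    have hd : ∏ i ∈ s, (X : PowerSeries K) ∣ ∏ i ∈ s, f i :=
      Finset.prod_dvd_prod_of_dvd (fun _ => (X : PowerSeries K)) f
        (fun i hi => X_dvd_iff.mpr (h0 i hi))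
    rwa [Finset.prod_const] at hd
  exact X_pow_dvd_iff.mp hdvd n hn

lemma coeff_prod_card {ι : Type*} [DecidableEq ι] (s : Finset ι) (f : ι → PowerSeries K)
    (h0 : ∀ i ∈ s, constantCoeff (f i) = 0) :
    coeff s.card (∏ i ∈ s, f i) = ∏ i ∈ s, coeff 1 (f i) := by
  induction s using Finset.induction_on with
  | empty => simp
  | @insert a s ha ih =>
    rw [Finset.prod_insert ha, Finset.prod_insert ha,
      Finset.card_insert_of_notMem ha, coeff_mul]
    have h0s : ∀ i ∈ s, constantCoeff (f i) = 0 := fun i hi => h0 i (Finset.mem_insert_of_mem hi)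
    rw [Finset.sum_eq_single (1, s.card)]
    · rw [ih h0s]
    · rintro ⟨p, q⟩ hpq hne
      rw [Finset.HasAntidiagonal.mem_antidiagonal] at hpq
      simp only at hpq ⊢
      rcases Nat.lt_trichotomy q s.card with hq | rfl | hq
      · rw [coeff_prod_lt s f h0s hq, mul_zero]
      · have : p = 1 := by omega
        exact absurd (by rw [this]) hne
      · have hp : p = 0 := by omega
        rw [hp, coeff_zero_eq_constantCoeff_apply, h0 a (Finset.mem_insert_self a s), zero_mul]
    · intro hmem
      exact absurd (Finset.HasAntidiagonal.mem_antidiagonal.mpr (by omega)) hmem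

lemma derivative_finset_prod {ι : Type*} [DecidableEq ι] (s : Finset ι) (f : ι → PowerSeries K) :
    d⁄dX K (∏ i ∈ s, f i) = ∑ i ∈ s, (∏ j ∈ s.erase i, f j) * d⁄dX K (f i) := by
  induction s using Finset.induction_on with
  | empty => simp [Derivation.map_one_eq_zero]
  | @insert a s ha ih =>
    have hterm : ∀ i ∈ s, f a * ((∏ j ∈ s.erase i, f j) * d⁄dX K (f i))
        = (∏ j ∈ (insert a s).erase i, f j) * d⁄dX K (f i) := by
      intro i hi
      have hia : i ≠ a := fun hc => ha (hc ▸ hi)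
      rw [Finset.erase_insert_of_ne hia.symm,
        Finset.prod_insert (fun hc => ha (Finset.mem_of_mem_erase hc))]
      ring
    rw [Finset.prod_insert ha, Derivation.leibniz]
    simp only [smul_eq_mul]
    rw [ih, Finset.mul_sum, Finset.sum_congr rfl hterm, Finset.sum_insert ha,
      Finset.erase_insert ha]
    exact add_comm _ _

lemma X_mul_derivative_rescale (c : K) (h : PowerSeries K) :
    X * d⁄dX K (rescale c h) = rescale c (X * d⁄dX K h) := by
  ext n
  match n with
  | 0 => simp [coeff_rescale]
  | n + 1 =>
    rw [coeff_succ_X_mul, coeff_derivative, coeff_rescale, coeff_rescale,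
      coeff_succ_X_mul, coeff_derivative]
    ring

end Aux

/-- Let `K` be a field of characteristic zero containing a primitive
`e`-th root of unity `ω` (`e ≥ 1`), let `Q ∈ K[[z]]` have constant term `1`, and let
`h ∈ K[[u]]` have zero constant term and satisfy `h(u)^e = u^e·Q(h(u))`; set
`H_i := h(ω^i·u)` for `i = 1,…,e`.  Then, in `K[[u]]` under the identification
`q = u^e`, writing `∏_{i=1}^e H_i = q·G` (so that `G = (∏ H_i)/q`):
the constant coefficient of `G` is exactly the sign `(−1)^{e+1}` (so
`(−1)^{e+1}·(∏ H_i)/q` has constant term `1`),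
`log ((−1)^{e+1}·∏ H_i/q) = Σ_{m≥1} (1/m)·[z^{me}]{Q(z)^m}·q^m`, and equivalently
`(−1)^{e+1}·∏_{i=1}^e H_i = q·exp (Σ_{m≥1} (1/m)·[z^{me}]{Q(z)^m}·q^m)`. -/
theorem stmt4 {K : Type*} [Field K] [CharZero K] (e : ℕ) (he : 1 ≤ e) (ω : K)
    (hω : IsPrimitiveRoot ω e) (Q h : PowerSeries K)
    (hQ1 : PowerSeries.constantCoeff Q = 1)
    (hh0 : PowerSeries.constantCoeff h = 0)
    (hh : h ^ e = PowerSeries.X ^ e * pcomp Q h)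
    (G : PowerSeries K)
    (hG : (∏ i ∈ Finset.Icc 1 e, PowerSeries.rescale (ω ^ i) h) = PowerSeries.X ^ e * G) :
    PowerSeries.constantCoeff G = (-1 : K) ^ (e + 1) ∧
    logS ((-1 : PowerSeries K) ^ (e + 1) * G)
      = pcomp (PowerSeries.mk fun m => (m : K)⁻¹ * PowerSeries.coeff (m * e) (Q ^ m))
          (PowerSeries.X ^ e) ∧
    ((-1 : PowerSeries K) ^ (e + 1) * ∏ i ∈ Finset.Icc 1 e, PowerSeries.rescale (ω ^ i) h)
      = PowerSeries.X ^ e *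
          expS (pcomp (PowerSeries.mk fun m => (m : K)⁻¹ * PowerSeries.coeff (m * e) (Q ^ m))
            (PowerSeries.X ^ e)) := by
  classical
  have hXne : (X : PowerSeries K) ≠ 0 := X_ne_zero
  have hXe : (X : PowerSeries K) ^ e ≠ 0 := pow_ne_zero e hXne
  obtain ⟨v, hv⟩ : ∃ v, h = X * v := X_dvd_iff.mpr hh0
  have hve : v ^ e = pcomp Q h := by
    apply mul_left_cancel₀ hXe
    rw [← mul_pow, ← hv, hh]
  have hc : constantCoeff v ^ e = 1 := by
    have hcc := congrArg (constantCoeff) hve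
    rwa [map_pow, constantCoeff_pcomp hh0, coeff_zero_eq_constantCoeff_apply, hQ1] at hcc
  have hc0 : constantCoeff v ≠ 0 := by
    intro hcon
    rw [hcon, zero_pow (by omega)] at hc
    exact zero_ne_one hc
  obtain ⟨w, hvw⟩ : ∃ w, v * w = 1 :=
    (isUnit_iff_constantCoeff.mpr (isUnit_iff_ne_zero.mpr hc0)).exists_right_inv
  set A : PowerSeries K := d⁄dX K h * w with hA
  have hhA : h * A = X * d⁄dX K h := by
    rw [hA, hv]
    calc (X * v) * (d⁄dX K (X * v) * w) = (X * d⁄dX K (X * v)) * (v * w) := by ring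
      _ = X * d⁄dX K (X * v) := by rw [hvw, mul_one]
  -- Step 1 : Lagrange coefficients
  have step1 : ∀ m : ℕ, 1 ≤ m → coeff (m * e) A = coeff (m * e) (Q ^ m) := by
    intro m hm
    have hres := res_lemma hvw (Q ^ m) (m * e + 1) (by omega)
    have hN1 : m * e + 1 - 1 = m * e := by omega
    rw [hN1] at hres
    have hpc : pcomp (Q ^ m) (X * v) = v ^ (m * e) := by
      rw [← hv, pcomp_pow hh0, ← hve, ← pow_mul, mul_comm e m]
    have hser : pcomp (Q ^ m) (X * v) * d⁄dX K (X * v) * w ^ (m * e + 1) = A := by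
      rw [hpc, ← hv, hA, pow_succ]
      calc v ^ (m * e) * d⁄dX K h * (w ^ (m * e) * w)
          = (d⁄dX K h * w) * (v * w) ^ (m * e) := by rw [mul_pow]; ring
        _ = d⁄dX K h * w := by rw [hvw, one_pow, mul_one]
    rwa [hser] at hres
  have hA0 : constantCoeff A = 1 := by
    have h2 : constantCoeff (d⁄dX K h) = constantCoeff v := by
      rw [hv, ← coeff_zero_eq_constantCoeff_apply, coeff_derivative,
        coeff_succ_X_mul 0 v, coeff_zero_eq_constantCoeff_apply]
      norm_num
    have h3 := congrArg (constantCoeff) hvw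
    rw [map_mul, map_one] at h3
    rw [hA, map_mul, h2]
    exact h3
  set Pr : PowerSeries K := ∏ i ∈ Finset.Icc 1 e, rescale (ω ^ i) h with hPrdef
  set B : PowerSeries K := ∑ i ∈ Finset.Icc 1 e, rescale (ω ^ i) A with hB
  have hcoeffB : ∀ n, coeff n B = (if e ∣ n then (e : K) else 0) * coeff n A := by
    intro n
    rw [hB, map_sum]
    simp only [coeff_rescale]
    rw [← Finset.sum_mul, rou_sum he hω n]
  have hXPr : X * d⁄dX K Pr = Pr * B := by
    rw [hPrdef, derivative_finset_prod, Finset.mul_sum]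
    have hterm : ∀ i ∈ Finset.Icc 1 e,
        X * ((∏ j ∈ (Finset.Icc 1 e).erase i, rescale (ω ^ j) h) * d⁄dX K (rescale (ω ^ i) h))
        = (∏ j ∈ Finset.Icc 1 e, rescale (ω ^ j) h) * rescale (ω ^ i) A := by
      intro i hi
      have h1 : X * d⁄dX K (rescale (ω ^ i) h) = rescale (ω ^ i) h * rescale (ω ^ i) A := by
        rw [X_mul_derivative_rescale, ← hhA, map_mul]
      calc X * ((∏ j ∈ (Finset.Icc 1 e).erase i, rescale (ω ^ j) h)
                * d⁄dX K (rescale (ω ^ i) h))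
          = (∏ j ∈ (Finset.Icc 1 e).erase i, rescale (ω ^ j) h)
            * (X * d⁄dX K (rescale (ω ^ i) h)) := by ring
        _ = ((∏ j ∈ (Finset.Icc 1 e).erase i, rescale (ω ^ j) h) * rescale (ω ^ i) h)
            * rescale (ω ^ i) A := by rw [h1]; ring
        _ = (∏ j ∈ Finset.Icc 1 e, rescale (ω ^ j) h) * rescale (ω ^ i) A := by
            rw [Finset.prod_erase_mul _ _ hi]
    rw [Finset.sum_congr rfl hterm, ← Finset.mul_sum, hB]
  have hdXe : d⁄dX K ((X : PowerSeries K) ^ e) = C (e : K) * X ^ (e - 1) := by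
    rw [Derivation.leibniz_pow, derivative_X]
    simp only [nsmul_eq_mul, smul_eq_mul, mul_one]
    rw [← map_natCast (C (R := K)) e]
  have hGrel : X * d⁄dX K G + C (e : K) * G = G * B := by
    apply mul_left_cancel₀ hXe
    have h3 : d⁄dX K Pr = X ^ e * d⁄dX K G + G * (C (e : K) * X ^ (e - 1)) := by
      rw [hG, Derivation.leibniz, hdXe]
      simp only [smul_eq_mul]
    have hXe1 : (X : PowerSeries K) * X ^ (e - 1) = X ^ e := by
      rw [← pow_succ']
      congr 1
      omega
    have h2 : X ^ e * (X * d⁄dX K G + C (e : K) * G) = X * d⁄dX K Pr := by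
      rw [h3]
      calc X ^ e * (X * d⁄dX K G + C (e : K) * G)
          = X ^ e * (X * d⁄dX K G) + (G * C (e : K)) * (X ^ e) := by ring
        _ = X ^ e * (X * d⁄dX K G) + (G * C (e : K)) * (X * X ^ (e - 1)) := by rw [hXe1]
        _ = X * (X ^ e * d⁄dX K G + G * (C (e : K) * X ^ (e - 1))) := by ring
    rw [h2, hXPr, hG]
    ring
  set M : PowerSeries K := PowerSeries.mk fun m => (m : K)⁻¹ * coeff (m * e) (Q ^ m) with hM
  set L : PowerSeries K := pcomp M (X ^ e) with hL
  have hXe0 : constantCoeff ((X : PowerSeries K) ^ e) = 0 := by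
    rw [map_pow, constantCoeff_X, zero_pow (by omega)]
  have hL0 : constantCoeff L = 0 := by
    rw [hL, constantCoeff_pcomp hXe0, hM, coeff_mk]
    simp
  have hLcoeff : ∀ m : ℕ, 1 ≤ m → coeff (m * e) L = (m : K)⁻¹ * coeff (m * e) (Q ^ m) := by
    intro m hm
    rw [hL, coeff_pcomp]
    rw [Finset.sum_eq_single m]
    · rw [← pow_mul, coeff_X_pow, if_pos (mul_comm m e), hM, coeff_mk, mul_one]
    · intro k hk hkm
      rw [← pow_mul, coeff_X_pow, if_neg, mul_zero]
      intro hcon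
      rw [mul_comm m e] at hcon
      exact hkm (Nat.eq_of_mul_eq_mul_left (by omega) hcon).symm
    · intro hmem
      exact absurd (Finset.mem_range.mpr (by
        have : m ≤ m * e := Nat.le_mul_of_pos_right m (by omega)
        omega)) hmem
  have hLnot : ∀ n, ¬ e ∣ n → coeff n L = 0 := by
    intro n hn
    rw [hL, coeff_pcomp]
    refine Finset.sum_eq_zero fun k hk => ?_
    rw [← pow_mul, coeff_X_pow, if_neg (fun hcon => hn ⟨k, hcon⟩), mul_zero]
  have hXdL : X * d⁄dX K L = B - C (e : K) := by
    ext n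
    match n with
    | 0 =>
      have hlhs : coeff 0 (X * d⁄dX K L) = 0 := by
        rw [coeff_zero_eq_constantCoeff_apply, map_mul, constantCoeff_X, zero_mul]
      rw [hlhs, map_sub, hcoeffB 0, coeff_zero_eq_constantCoeff_apply, hA0,
        coeff_zero_eq_constantCoeff_apply, constantCoeff_C, if_pos (dvd_zero e), mul_one, sub_self]
    | n + 1 =>
      rw [coeff_succ_X_mul, coeff_derivative, map_sub, coeff_C, if_neg (Nat.succ_ne_zero n),
        sub_zero, hcoeffB]
      by_cases hdvd : e ∣ (n + 1)
      · obtain ⟨m, hm⟩ := hdvd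
        have hm1 : 1 ≤ m := by
          rcases Nat.eq_zero_or_pos m with rfl | hp
          · omega
          · exact hp
        have hme : n + 1 = m * e := by rw [hm, mul_comm]
        rw [if_pos ⟨m, hm⟩]
        have hcast : ((n : K) + 1) = (m : K) * (e : K) := by
          have : ((n + 1 : ℕ) : K) = ((m * e : ℕ) : K) := by rw [hme]
          push_cast at this
          exact this
        rw [hme, hLcoeff m hm1, step1 m hm1, hcast]
        have hmK : (m : K) ≠ 0 := by exact_mod_cast Nat.one_le_iff_ne_zero.mp hm1
        field_simp
      · rw [if_neg hdvd, zero_mul, hLnot _ hdvd, zero_mul]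
  have hconstG : constantCoeff G = (-1 : K) ^ (e + 1) := by
    have h1 : coeff 0 G = coeff e Pr := by
      rw [hG]
      simpa using (coeff_X_pow_mul G e 0).symm
    have hcard : (Finset.Icc 1 e).card = e := by rw [Nat.card_Icc]; omega
    have h2 : coeff e Pr = ∏ i ∈ Finset.Icc 1 e, coeff 1 (rescale (ω ^ i) h) := by
      have hcp := coeff_prod_card (Finset.Icc 1 e) (fun i => rescale (ω ^ i) h) (fun i hi => by
        rw [← coeff_zero_eq_constantCoeff_apply, coeff_rescale, pow_zero, one_mul,
          coeff_zero_eq_constantCoeff_apply, hh0])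
      rw [hcard] at hcp
      exact hcp
    have h4 : coeff 1 h = constantCoeff v := by
      rw [hv, coeff_succ_X_mul 0 v, coeff_zero_eq_constantCoeff_apply]
    have h3 : ∏ i ∈ Finset.Icc 1 e, coeff 1 (rescale (ω ^ i) h)
        = ω ^ (∑ i ∈ Finset.Icc 1 e, i) * (constantCoeff v) ^ e := by
      simp only [coeff_rescale, pow_one, h4]
      rw [Finset.prod_mul_distrib, Finset.prod_pow_eq_pow_sum, Finset.prod_const, hcard]
    rw [← coeff_zero_eq_constantCoeff_apply, h1, h2, h3, hc, mul_one, rou_sign he hω]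
  have hdG : d⁄dX K G = G * d⁄dX K L := by
    apply mul_left_cancel₀ hXne
    calc X * d⁄dX K G = G * B - C (e : K) * G := by
          rw [← hGrel]; ring
      _ = G * (B - C (e : K)) := by ring
      _ = G * (X * d⁄dX K L) := by rw [hXdL]
      _ = X * (G * d⁄dX K L) := by ring
  have hone : ((-1 : PowerSeries K)) ^ (e + 1) = C ((-1 : K) ^ (e + 1)) := by
    rw [map_pow, map_neg, map_one]
  set g : PowerSeries K := (-1 : PowerSeries K) ^ (e + 1) * G with hg
  have hdg : d⁄dX K g = g * d⁄dX K L := by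
    rw [hg, hone, Derivation.leibniz, derivative_C, smul_zero, add_zero, smul_eq_mul, hdG]
    ring
  have hsignsq : (-1 : K) ^ (e + 1) * (-1 : K) ^ (e + 1) = 1 := by
    rw [← pow_add]
    have h5 : e + 1 + (e + 1) = 2 * (e + 1) := by omega
    rw [h5, pow_mul]
    norm_num
  have hg0 : constantCoeff g = 1 := by
    rw [hg, hone, map_mul, constantCoeff_C, hconstG, hsignsq]
  have hexp : g = expS L := by
    have hdE : d⁄dX K (expS L) = expS L * d⁄dX K L := by
      rw [expS, pcomp_derivative hL0, derivative_expSeries]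
    have hE0 : constantCoeff (expS L) = 1 := by
      rw [expS, constantCoeff_pcomp hL0, expSeries, coeff_mk]
      simp
    exact ode_unique hdg hdE (by rw [hg0, hE0])
  have hgm1 : constantCoeff (g - 1) = 0 := by rw [map_sub, hg0, map_one, sub_self]
  have hlog : logS g = L := by
    have hdgm : d⁄dX K (g - 1) = g * d⁄dX K L := by
      rw [map_sub, Derivation.map_one_eq_zero, sub_zero, hdg]
    have hgeom : pcomp (geomS K) (g - 1) * g = 1 := by
      have hgm := geom_mul hgm1
      rw [show (1 : PowerSeries K) + (g - 1) = g by ring] at hgm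
      exact hgm
    have hd1 : d⁄dX K (logS g) = d⁄dX K L := by
      rw [logS, pcomp_derivative hgm1, derivative_logSeries, hdgm]
      calc pcomp (geomS K) (g - 1) * (g * d⁄dX K L)
          = (pcomp (geomS K) (g - 1) * g) * d⁄dX K L := by ring
        _ = d⁄dX K L := by rw [hgeom, one_mul]
    have h0 : constantCoeff (logS g) = constantCoeff L := by
      rw [logS, constantCoeff_pcomp hgm1, logSeries, coeff_mk, hL0]
      simp
    exact derivative.ext hd1 h0
  refine ⟨hconstG, hlog, ?_⟩
  calc (-1 : PowerSeries K) ^ (e + 1) * Pr = X ^ e * g := by rw [hG, hg]; ring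
    _ = X ^ e * expS L := by rw [hexp]
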